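/- Let (X, ‖·‖) be a quasi-Banach space and T : X → X a (b,θ)-enriched contraction. Then there exists λ ∈ (0,1] such that for any x_0 ∈ X, the Krasnoselskij iteration x_{n+1} = (1−λ)x_n + λT x_n converges to the unique fixed point p of T. -/

import Mathlib

/-- for a (b,θ)-enriched contraction on a quasi-Banach space, there is
λ ∈ (0,1] such that the Krasnoselskij iteration converges to the unique fixed point. -/
theorem stmt_7 {X : Type*} [AddCommGroup X] [Module ℝ X] (Nm : X → ℝ) (C : ℝ)
    (hC : 1 ≤ C)
    (hnn : ∀ x, 0 ≤ Nm x)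
    (h0 : ∀ x, Nm x = 0 ↔ x = 0)
    (h1 : ∀ (r : ℝ) (x : X), Nm (r • x) = |r| * Nm x)
    (h2 : ∀ x y, Nm (x + y) ≤ C * (Nm x + Nm y))
    (hcomplete : ∀ u : ℕ → X,
      (∀ ε > 0, ∃ N : ℕ, ∀ m ≥ N, ∀ n ≥ N, Nm (u m - u n) < ε) →
      ∃ l : X, Filter.Tendsto (fun n => Nm (u n - l)) Filter.atTop (nhds 0))
    (T : X → X) (b θ : ℝ) (hb : 0 ≤ b) (hθ0 : 0 ≤ θ) (hθ : θ < b + 1)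
    (hT : ∀ x y, Nm (b • (x - y) + (T x - T y)) ≤ θ * Nm (x - y)) :
    ∃ l : ℝ, 0 < l ∧ l ≤ 1 ∧
      ∃ p : X, T p = p ∧ (∀ q, T q = q → q = p) ∧
        ∀ xs : ℕ → X,
          (∀ n : ℕ, xs (n + 1) = (1 - l) • xs n + l • T (xs n)) →
          Filter.Tendsto (fun n => Nm (xs n - p)) Filter.atTop (nhds 0) := by
  have hb1 : (0:ℝ) < b + 1 := by linarith
  set l : ℝ := 1 / (b + 1) with hl_def
  have hl0 : 0 < l := by positivity
  have hl1 : l ≤ 1 := by rw [hl_def, div_le_one hb1]; linarith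
  set c : ℝ := θ * l with hc_def
  have hc0 : 0 ≤ c := by positivity
  have hc1 : c < 1 := by
    rw [hc_def, hl_def, mul_one_div, div_lt_one hb1]; exact hθ
  have hC0 : 0 ≤ C := by linarith
  set S : X → X := fun x => (1 - l) • x + l • T x with hS_def
  -- symmetry of the quasi-norm
  have nm_symm : ∀ x y : X, Nm (x - y) = Nm (y - x) := by
    intro x y
    have e : x - y = (-1 : ℝ) • (y - x) := by module
    rw [e, h1]; simp
  -- contraction property of S
  have key : ∀ x y, Nm (S x - S y) ≤ c * Nm (x - y) := by
    intro x y
    have hlb : 1 - l = l * b := by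
      rw [hl_def]; field_simp; ring
    have e : S x - S y = l • (b • (x - y) + (T x - T y)) := by
      simp only [hS_def]
      rw [hlb]; module
    rw [e, h1, abs_of_pos hl0]
    calc l * Nm (b • (x - y) + (T x - T y)) ≤ l * (θ * Nm (x - y)) :=
          mul_le_mul_of_nonneg_left (hT x y) hl0.le
      _ = c * Nm (x - y) := by rw [hc_def]; ring
  -- iterates
  have hiter : ∀ (n : ℕ) (x y : X), Nm (S^[n] x - S^[n] y) ≤ c ^ n * Nm (x - y) := by
    intro n
    induction n with
    | zero => intro x y; simp
    | succ n ih =>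
      intro x y
      rw [Function.iterate_succ_apply', Function.iterate_succ_apply']
      calc Nm (S (S^[n] x) - S (S^[n] y)) ≤ c * Nm (S^[n] x - S^[n] y) := key _ _
        _ ≤ c * (c ^ n * Nm (x - y)) := mul_le_mul_of_nonneg_left (ih x y) hc0
        _ = c ^ (n + 1) * Nm (x - y) := by ring
  set u : ℕ → X := fun n => S^[n] 0 with hu_def
  have humn : ∀ n k : ℕ, Nm (u (n + k) - u n) ≤ c ^ n * Nm (u k) := by
    intro n k
    have e1 : u (n + k) = S^[n] (u k) := by
      rw [hu_def]; simp [Function.iterate_add_apply]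
    have e2 : u n = S^[n] 0 := rfl
    calc Nm (u (n + k) - u n) = Nm (S^[n] (u k) - S^[n] 0) := by rw [e1, e2]
      _ ≤ c ^ n * Nm (u k - 0) := hiter n _ _
      _ = c ^ n * Nm (u k) := by rw [sub_zero]
  -- boundedness of the orbit
  obtain ⟨J, hJpow⟩ : ∃ J : ℕ, c ^ J < 1 / (2 * C) := by
    have h : (0:ℝ) < 1 / (2 * C) := by positivity
    exact exists_pow_lt_of_lt_one h hc1
  have hJ : C * c ^ J ≤ 1 / 2 := by
    have := mul_lt_mul_of_pos_left hJpow (lt_of_lt_of_le one_pos hC)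
    have h2C : C * (1 / (2 * C)) = 1 / 2 := by field_simp
    linarith [h2C ▸ this]
  have hJ0 : J ≠ 0 := by
    rintro rfl
    simp only [pow_zero, mul_one] at hJ
    linarith
  set M : ℝ := (Finset.range (J + 1)).sup' (by simp) (fun i => Nm (u i)) with hM_def
  have hM : ∀ i ≤ J, Nm (u i) ≤ M := by
    intro i hi
    exact Finset.le_sup' (fun i => Nm (u i)) (Finset.mem_range.mpr (by omega))
  have hM0 : 0 ≤ M := le_trans (hnn (u 0)) (hM 0 (Nat.zero_le _))
  have hbound : ∀ k, Nm (u k) ≤ 2 * C * M := by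
    intro k
    induction k using Nat.strong_induction_on with
    | _ k ih =>
      by_cases hk : k ≤ J
      · calc Nm (u k) ≤ M := hM k hk
          _ ≤ 2 * C * M := by nlinarith
      · push_neg at hk
        have hkJ : k = J + (k - J) := by omega
        have e : u k = (u k - u J) + u J := by abel
        have step1 : Nm (u k - u J) ≤ c ^ J * Nm (u (k - J)) := by
          have := humn J (k - J)
          rwa [← hkJ] at this
        have step2 : Nm (u (k - J)) ≤ 2 * C * M := ih (k - J) (by omega)
        have step3 : Nm (u J) ≤ M := hM J le_rfl
        calc Nm (u k) = Nm ((u k - u J) + u J) := by rw [← e]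
          _ ≤ C * (Nm (u k - u J) + Nm (u J)) := h2 _ _
          _ ≤ 2 * C * M := by nlinarith [pow_nonneg hc0 J, hnn (u (k - J)), hnn (u k - u J)]
  set B : ℝ := 2 * C * M with hB_def
  have hB0 : 0 ≤ B := by positivity
  -- u is Cauchy
  have hcauchy : ∀ ε > 0, ∃ N : ℕ, ∀ m ≥ N, ∀ n ≥ N, Nm (u m - u n) < ε := by
    intro ε hε
    have htend : Filter.Tendsto (fun n => c ^ n * B) Filter.atTop (nhds 0) := by
      simpa using (tendsto_pow_atTop_nhds_zero_of_lt_one hc0 hc1).mul_const B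
    have hev : ∀ᶠ n in Filter.atTop, c ^ n * B < ε :=
      htend.eventually_lt_const hε
    obtain ⟨N, hN⟩ := Filter.eventually_atTop.mp hev
    refine ⟨N, ?_⟩
    have main : ∀ m n : ℕ, N ≤ n → n ≤ m → Nm (u m - u n) < ε := by
      intro m n hn hnm
      have hm : m = n + (m - n) := by omega
      have h := humn n (m - n)
      rw [← hm] at h
      have h' : c ^ n * Nm (u (m - n)) ≤ c ^ n * B :=
        mul_le_mul_of_nonneg_left (hbound _) (pow_nonneg hc0 n)
      exact lt_of_le_of_lt (le_trans h h') (hN n hn)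
    intro m hm n hn
    rcases le_total n m with h | h
    · exact main m n hn h
    · rw [nm_symm]; exact main n m hm h
  obtain ⟨p, hp⟩ := hcomplete u hcauchy
  -- p is a fixed point of S
  have hp' : Filter.Tendsto (fun n => Nm (u (n + 1) - p)) Filter.atTop (nhds 0) :=
    hp.comp (Filter.tendsto_add_atTop_nat 1)
  have hSfix : S p = p := by
    have h3 : ∀ n, Nm (S p - p) ≤ C * (c * Nm (u n - p) + Nm (u (n + 1) - p)) := by
      intro n
      have e : S p - p = (S p - u (n + 1)) + (u (n + 1) - p) := by abel
      have eu : u (n + 1) = S (u n) := Function.iterate_succ_apply' S n 0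
      have h4 : Nm (S p - u (n + 1)) ≤ c * Nm (u n - p) := by
        rw [eu]
        calc Nm (S p - S (u n)) ≤ c * Nm (p - u n) := key _ _
          _ = c * Nm (u n - p) := by rw [nm_symm]
      calc Nm (S p - p) = Nm ((S p - u (n + 1)) + (u (n + 1) - p)) := by rw [← e]
        _ ≤ C * (Nm (S p - u (n + 1)) + Nm (u (n + 1) - p)) := h2 _ _
        _ ≤ C * (c * Nm (u n - p) + Nm (u (n + 1) - p)) := by
            apply mul_le_mul_of_nonneg_left _ hC0
            exact add_le_add h4 le_rfl
    have hlim : Filter.Tendsto (fun n => C * (c * Nm (u n - p) + Nm (u (n + 1) - p)))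
        Filter.atTop (nhds 0) := by
      have := ((hp.const_mul c).add hp').const_mul C
      simpa using this
    have hle : Nm (S p - p) ≤ 0 :=
      ge_of_tendsto hlim (Filter.Eventually.of_forall h3)
    have : Nm (S p - p) = 0 := le_antisymm hle (hnn _)
    have := (h0 _).mp this
    exact sub_eq_zero.mp this
  have hTfix : T p = p := by
    have e : l • (T p - p) = S p - p := by
      simp only [hS_def]; module
    rw [hSfix, sub_self] at e
    have := smul_eq_zero.mp e
    rcases this with h | h
    · exact absurd h (ne_of_gt hl0)
    · exact sub_eq_zero.mp h
  -- uniqueness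
  have huniq : ∀ q, T q = q → q = p := by
    intro q hq
    have hSq : S q = q := by
      simp only [hS_def, hq]; module
    have := key q p
    rw [hSq, hSfix] at this
    have hzero : Nm (q - p) = 0 := by nlinarith [hnn (q - p)]
    exact sub_eq_zero.mp ((h0 _).mp hzero)
  refine ⟨l, hl0, hl1, p, hTfix, huniq, ?_⟩
  intro xs hxs
  have hxsn : ∀ n, xs n = S^[n] (xs 0) := by
    intro n
    induction n with
    | zero => simp
    | succ n ih =>
      rw [hxs n, ih, Function.iterate_succ_apply']
  have hbnd : ∀ n, Nm (xs n - p) ≤ c ^ n * Nm (xs 0 - p) := by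
    intro n
    have hpfix : S^[n] p = p := Function.iterate_fixed hSfix n
    have h := hiter n (xs 0) p
    rw [hpfix] at h
    rw [hxsn n]; exact h
  have htend : Filter.Tendsto (fun n => c ^ n * Nm (xs 0 - p)) Filter.atTop (nhds 0) := by
    simpa using (tendsto_pow_atTop_nhds_zero_of_lt_one hc0 hc1).mul_const (Nm (xs 0 - p))
  exact squeeze_zero (fun n => hnn _) hbnd htend
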